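/- arXiv:2307.08643 — 5 statements merged into one kernel-verified Lean document; each statement's English description precedes it below -/
import Mathlib

section
/- Loss correction for (dependent) label corruption: let λ be a Markov kernel from X × Y to Y and let κ† be the Markov kernel from X × Y to X × Y sending (x̃, ỹ) to the product measure δ_{x̃} ×ₘ λ(x̃, ỹ). Let P̃ and P be probability measures on X × Y such that P = P̃ ∘ κ† (the bind of P̃ with κ†). Define the corrected loss ℓ̃ : 𝒫(Y) × X × Y → ℝ by ℓ̃(p, x̃, ỹ) := ∑_{y ∈ Y} λ(x̃, ỹ)({y}) · ℓ(p, y). Then for every hypothesis h, ∫_{X×Y} ℓ(h(x), y) dP(x, y) = ∫_{X×Y} ℓ̃(h(x̃), x̃, ỹ) dP̃(x̃, ỹ); consequently, for every hypothesis class H, inf_{h ∈ H} ∫ ℓ(h(x), y) dP = inf_{h ∈ H} ∫ ℓ̃(h(x̃), x̃, ỹ) dP̃, and a hypothesis h* ∈ H minimizes the clean risk over H if and only if it minimizes the corrected corrupted risk over H. -/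
open MeasureTheory ProbabilityTheory

/-- A hypothesis: a measurable map from `X` to probability measures on `Y`
(equivalently, a Markov kernel from `X` to `Y`). -/
structure Hypothesis (X Y : Type*) [MeasurableSpace X] [MeasurableSpace Y] where
  toFun : X → Measure Y
  measurable' : Measurable toFun
  prob' : ∀ x, IsProbabilityMeasure (toFun x)

/-- Loss correction for (dependent) label corruption: if the cleaning kernel is
`κ† = δ_X ⊗ λ` with `λ : X × Y ⇝ Y`, then the corrected loss
`ℓ̃(p, x̃, ỹ) := ∑_y λ(x̃, ỹ)({y}) ℓ(p, y)` preserves the risk of every hypothesis,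
hence the constrained Bayes risks agree, and a hypothesis minimizes the clean risk
over a class `H` iff it minimizes the corrected corrupted risk over `H`. -/
theorem loss_correction_label {X Y : Type*} [MeasurableSpace X]
    [Fintype Y] [Nonempty Y] [MeasurableSpace Y] [MeasurableSingletonClass Y]
    (loss : Measure Y → Y → ℝ)
    (hmeas : Measurable fun p : Measure Y × Y => loss p.1 p.2)
    (hnonneg : ∀ p y, 0 ≤ loss p y)
    (C : ℝ) (hbdd : ∀ p y, loss p y ≤ C)
    (lam : Kernel (X × Y) Y) [IsMarkovKernel lam]
    (P Pt : Measure (X × Y)) [IsProbabilityMeasure P] [IsProbabilityMeasure Pt]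
    (hclean : P = Pt.bind fun p : X × Y => (Measure.dirac p.1).prod (lam p))
    (lossCorr : Measure Y → X × Y → ℝ)
    (hlossCorr : ∀ p z, lossCorr p z = ∑ y : Y, (lam z {y}).toReal * loss p y) :
    (∀ h : Hypothesis X Y,
        ∫ z : X × Y, loss (h.toFun z.1) z.2 ∂P =
          ∫ z : X × Y, lossCorr (h.toFun z.1) z ∂Pt) ∧
      (∀ H : Set (Hypothesis X Y),
        (⨅ h ∈ H, ∫ z : X × Y, loss (h.toFun z.1) z.2 ∂P) =
          ⨅ h ∈ H, ∫ z : X × Y, lossCorr (h.toFun z.1) z ∂Pt) ∧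
      ∀ (H : Set (Hypothesis X Y)) (hstar : Hypothesis X Y), hstar ∈ H →
        ((∀ h ∈ H, ∫ z : X × Y, loss (hstar.toFun z.1) z.2 ∂P ≤
            ∫ z : X × Y, loss (h.toFun z.1) z.2 ∂P) ↔
          ∀ h ∈ H, ∫ z : X × Y, lossCorr (hstar.toFun z.1) z ∂Pt ≤
            ∫ z : X × Y, lossCorr (h.toFun z.1) z ∂Pt) := by
  have key : ∀ h : Hypothesis X Y,
      ∫ z : X × Y, loss (h.toFun z.1) z.2 ∂P =
        ∫ z : X × Y, lossCorr (h.toFun z.1) z ∂Pt := by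
    intro h
    set K : Kernel (X × Y) (X × Y) :=
      (Kernel.deterministic (Prod.fst : X × Y → X) measurable_fst) ×ₖ lam with hK
    have hKapp : ∀ z : X × Y, K z = (Measure.dirac z.1).prod (lam z) := by
      intro z
      rw [hK, Kernel.prod_apply, Kernel.deterministic_apply]
    have hclean' : P = Pt.bind (fun z => K z) := by
      rw [hclean]; congr 1; ext z; rw [hKapp]
    -- measurability of the integrand
    have hfmeas : Measurable fun z : X × Y => loss (h.toFun z.1) z.2 :=
      hmeas.comp ((h.measurable'.comp measurable_fst).prodMk measurable_snd)
    have hgmeas : Measurable fun z : X × Y => ENNReal.ofReal (loss (h.toFun z.1) z.2) :=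
      hfmeas.ennreal_ofReal
    -- measurability of the corrected loss
    have hcmeas : Measurable fun z : X × Y => lossCorr (h.toFun z.1) z := by
      have : (fun z : X × Y => lossCorr (h.toFun z.1) z) =
          fun z => ∑ y : Y, (lam z {y}).toReal * loss (h.toFun z.1) y := by
        ext z; exact hlossCorr _ z
      rw [this]
      refine Finset.measurable_sum _ fun y _ => ?_
      exact ((lam.measurable_coe (measurableSet_singleton y)).ennreal_toReal).mul
        (hmeas.comp ((h.measurable'.comp measurable_fst).prodMk measurable_const))
    have hcnonneg : ∀ z : X × Y, 0 ≤ lossCorr (h.toFun z.1) z := by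
      intro z
      rw [hlossCorr]
      exact Finset.sum_nonneg fun y _ => mul_nonneg ENNReal.toReal_nonneg (hnonneg _ _)
    -- pointwise computation of the inner lintegral
    have hinner : ∀ z : X × Y,
        ∫⁻ w : X × Y, ENNReal.ofReal (loss (h.toFun w.1) w.2) ∂(K z) =
          ENNReal.ofReal (lossCorr (h.toFun z.1) z) := by
      intro z
      rw [hK, Kernel.lintegral_prod (Kernel.deterministic (Prod.fst : X × Y → X) measurable_fst) lam z hgmeas, Kernel.deterministic_apply,
        lintegral_dirac' _ (Measurable.lintegral_prod_right' hgmeas)]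
      rw [lintegral_fintype, hlossCorr, ENNReal.ofReal_sum_of_nonneg
        (fun y _ => mul_nonneg ENNReal.toReal_nonneg (hnonneg _ _))]
      refine Finset.sum_congr rfl fun y _ => ?_
      rw [ENNReal.ofReal_mul ENNReal.toReal_nonneg,
        ENNReal.ofReal_toReal (measure_ne_top _ _), mul_comm]
    -- now compute the integrals via lintegrals
    rw [integral_eq_lintegral_of_nonneg_ae (Filter.Eventually.of_forall fun z => hnonneg _ _)
        hfmeas.aestronglyMeasurable,
      integral_eq_lintegral_of_nonneg_ae (Filter.Eventually.of_forall fun z => hcnonneg z)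
        hcmeas.aestronglyMeasurable, hclean',
      Measure.lintegral_bind (K.measurable).aemeasurable hgmeas.aemeasurable]
    congr 1
    exact lintegral_congr hinner
  refine ⟨key, fun H => ?_, fun H hstar _ => ?_⟩
  · exact iInf_congr fun h => by rw [key h]
  · constructor
    · intro hmin h hh; rw [← key hstar, ← key h]; exact hmin h hh
    · intro hmin h hh; rw [key hstar, key h]; exact hmin h hh
end

section
/- Loss correction under general joint corruption: let τ be a Markov kernel from X × Y to X and λ a Markov kernel from X × Y to Y, and let κ† be the Markov kernel from X × Y to X × Y sending (x̃, ỹ) to the product measure τ(x̃, ỹ) ×ₘ λ(x̃, ỹ). Let P̃ and P be probability measures on X × Y such that P = P̃ ∘ κ†. Then for every hypothesis h, ∫_{X×Y} ℓ(h(x), y) dP(x, y) = ∫_{X×Y} [ ∫_{𝒫(Y)} ( ∑_{y ∈ Y} λ(x̃, ỹ)({y}) · ℓ(u, y) ) d((τ(x̃, ỹ)).map h)(u) ] dP̃(x̃, ỹ), where (τ(x̃, ỹ)).map h denotes the pushforward of the measure τ(x̃, ỹ) on X under h (the measure τ # h on 𝒫(Y)); i.e. the corrected loss ℓ̃(h,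 x̃, ỹ) := E_{u ∼ (τ # h)(x̃, ỹ)}[ ∑_{y ∈ Y} λ(x̃, ỹ)({y}) · ℓ(u, y) ] preserves the risk of every hypothesis. -/
open MeasureTheory ProbabilityTheory ENNReal

/-- Loss correction under general joint corruption: if the cleaning kernel is
`κ† = τ ⊗ λ` with `τ : X × Y ⇝ X` and `λ : X × Y ⇝ Y`, then the corrected loss
`ℓ̃(h, x̃, ỹ) := E_{u ∼ (τ # h)(x̃, ỹ)}[ ∑_y λ(x̃, ỹ)({y}) ℓ(u, y) ]`
preserves the risk of every hypothesis. -/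
theorem loss_correction_joint {X Y : Type*} [MeasurableSpace X]
    [Fintype Y] [Nonempty Y] [MeasurableSpace Y] [MeasurableSingletonClass Y]
    (loss : Measure Y → Y → ℝ)
    (hmeas : Measurable fun p : Measure Y × Y => loss p.1 p.2)
    (hnonneg : ∀ p y, 0 ≤ loss p y)
    (C : ℝ) (hbdd : ∀ p y, loss p y ≤ C)
    (τ : Kernel (X × Y) X) [IsMarkovKernel τ]
    (lam : Kernel (X × Y) Y) [IsMarkovKernel lam]
    (P Pt : Measure (X × Y)) [IsProbabilityMeasure P] [IsProbabilityMeasure Pt]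
    (hclean : P = Pt.bind fun p : X × Y => (τ p).prod (lam p)) :
    ∀ h : Hypothesis X Y,
      ∫ z : X × Y, loss (h.toFun z.1) z.2 ∂P =
        ∫ z : X × Y,
          (∫ u, ∑ y : Y, (lam z {y}).toReal * loss u y ∂((τ z).map h.toFun)) ∂Pt := by
  intro h
  have hmh : Measurable h.toFun := h.measurable'
  set g : X × Y → ℝ≥0∞ := fun p => ENNReal.ofReal (loss (h.toFun p.1) p.2) with hg
  have hfm : Measurable fun p : X × Y => loss (h.toFun p.1) p.2 :=
    hmeas.comp ((hmh.comp measurable_fst).prodMk measurable_snd)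
  have hgm : Measurable g := ENNReal.measurable_ofReal.comp hfm
  set L : X × Y → ℝ≥0∞ := fun z => ∫⁻ x, ∑ y : Y, g (x, y) * lam z {y} ∂(τ z) with hL
  have hLm : Measurable L := by
    apply Measurable.lintegral_kernel_prod_right (κ := τ)
      (f := fun z x => ∑ y : Y, g (x, y) * lam z {y})
    apply Finset.measurable_sum
    intro y _
    exact (hgm.comp ((measurable_snd.prodMk measurable_const))).mul
      ((Kernel.measurable_coe lam (measurableSet_singleton y)).comp measurable_fst)
  -- bound on L
  have hterm : ∀ z x, (∑ y : Y, g (x, y) * lam z {y}) ≤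
      (Fintype.card Y : ℝ≥0∞) * ENNReal.ofReal C := by
    intro z x
    calc ∑ y : Y, g (x, y) * lam z {y} ≤ ∑ _y : Y, ENNReal.ofReal C := by
          apply Finset.sum_le_sum
          intro y _
          calc g (x, y) * lam z {y} ≤ ENNReal.ofReal C * 1 := by
                exact mul_le_mul' (ENNReal.ofReal_le_ofReal (hbdd _ _)) (prob_le_one)
            _ = ENNReal.ofReal C := mul_one _
      _ = (Fintype.card Y : ℝ≥0∞) * ENNReal.ofReal C := by
          simp [Finset.sum_const, nsmul_eq_mul]
  have hLlt : ∀ z, L z < ⊤ := by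
    intro z
    calc L z ≤ ∫⁻ _x, (Fintype.card Y : ℝ≥0∞) * ENNReal.ofReal C ∂(τ z) :=
          lintegral_mono fun x => hterm z x
      _ = (Fintype.card Y : ℝ≥0∞) * ENNReal.ofReal C := by simp
      _ < ⊤ := ENNReal.mul_lt_top (by simp) ENNReal.ofReal_lt_top
  -- LHS
  have hLHS : ∫ z : X × Y, loss (h.toFun z.1) z.2 ∂P = (∫⁻ z, L z ∂Pt).toReal := by
    rw [integral_eq_lintegral_of_nonneg_ae (Filter.Eventually.of_forall fun z => hnonneg _ _)
      hfm.aestronglyMeasurable]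
    congr 1
    have hκm : Measurable fun p : X × Y => (τ p).prod (lam p) := by
      have := (τ ×ₖ lam).measurable
      simpa [funext fun p => Kernel.prod_apply τ lam p] using this
    rw [hclean, Measure.lintegral_bind hκm.aemeasurable hgm.aemeasurable]
    congr 1
    funext z
    rw [lintegral_prod _ hgm.aemeasurable]
    congr 1
    funext x
    rw [lintegral_fintype]
  -- RHS inner
  have hinner : ∀ z, (∫ u, ∑ y : Y, (lam z {y}).toReal * loss u y ∂((τ z).map h.toFun))
      = (L z).toReal := by
    intro z
    have hsm : Measurable fun u : Measure Y => ∑ y : Y, (lam z {y}).toReal * loss u y := by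
      apply Finset.measurable_sum
      intro y _
      exact measurable_const.mul (hmeas.comp (measurable_id.prodMk measurable_const))
    rw [integral_map hmh.aemeasurable hsm.aestronglyMeasurable]
    have hnn : ∀ x, 0 ≤ ∑ y : Y, (lam z {y}).toReal * loss (h.toFun x) y := by
      intro x
      exact Finset.sum_nonneg fun y _ => mul_nonneg ENNReal.toReal_nonneg (hnonneg _ _)
    rw [integral_eq_lintegral_of_nonneg_ae (Filter.Eventually.of_forall hnn)
      (hsm.comp hmh).aestronglyMeasurable]
    congr 1
    apply lintegral_congr
    intro x
    rw [ENNReal.ofReal_sum_of_nonneg fun y _ => mul_nonneg ENNReal.toReal_nonneg (hnonneg _ _)]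
    apply Finset.sum_congr rfl
    intro y _
    rw [ENNReal.ofReal_mul ENNReal.toReal_nonneg, ENNReal.ofReal_toReal (measure_ne_top _ _),
      mul_comm]
  -- conclude
  calc ∫ z : X × Y, loss (h.toFun z.1) z.2 ∂P = (∫⁻ z, L z ∂Pt).toReal := hLHS
    _ = ∫ z, (L z).toReal ∂Pt :=
        (integral_toReal hLm.aemeasurable (Filter.Eventually.of_forall hLlt)).symm
    _ = ∫ z : X × Y,
          (∫ u, ∑ y : Y, (lam z {y}).toReal * loss u y ∂((τ z).map h.toFun)) ∂Pt := by
        exact integral_congr_ae (Filter.Eventually.of_forall fun z => (hinner z).symm)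
end

section
/- Loss correction under 1-dependent corruption: let τ be a Markov kernel from Y to X and λ a Markov kernel from X to Y, and let κ† be the Markov kernel from X × Y to X × Y sending (x̃, ỹ) to the product measure τ(ỹ) ×ₘ λ(x̃). Let P̃ and P be probability measures on X × Y such that P = P̃ ∘ κ†. Then for every hypothesis h, ∫_{X×Y} ℓ(h(x), y) dP(x, y) = ∫_{X×Y} [ ∫_{𝒫(Y)} ( ∑_{y ∈ Y} λ(x̃)({y}) · ℓ(u, y) ) d((τ(ỹ)).map h)(u) ] dP̃(x̃, ỹ), where (τ(ỹ)).map h denotes the pushforward of the measure τ(ỹ) on X under h; i.e. the corrected loss ℓ̃(h, x̃, ỹ) := E_{u ∼ (τ # h)(ỹ)}[ ∑_{y ∈ Y} λ(x̃)({y}) · ℓ(u, y) ] preserves the risk of every hypothesis. -/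
open MeasureTheory ProbabilityTheory

/-- Loss correction under 1-dependent corruption: if the cleaning kernel is
`κ† = τ ⊗ λ` with `τ : Y ⇝ X` and `λ : X ⇝ Y`, then the corrected loss
`ℓ̃(h, x̃, ỹ) := E_{u ∼ (τ # h)(ỹ)}[ ∑_y λ(x̃)({y}) ℓ(u, y) ]`
preserves the risk of every hypothesis. -/
theorem loss_correction_one_dependent {X Y : Type*} [MeasurableSpace X]
    [Fintype Y] [Nonempty Y] [MeasurableSpace Y] [MeasurableSingletonClass Y]
    (loss : Measure Y → Y → ℝ)
    (hmeas : Measurable fun p : Measure Y × Y => loss p.1 p.2)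
    (hnonneg : ∀ p y, 0 ≤ loss p y)
    (C : ℝ) (hbdd : ∀ p y, loss p y ≤ C)
    (τ : Kernel Y X) [IsMarkovKernel τ]
    (lam : Kernel X Y) [IsMarkovKernel lam]
    (P Pt : Measure (X × Y)) [IsProbabilityMeasure P] [IsProbabilityMeasure Pt]
    (hclean : P = Pt.bind fun p : X × Y => (τ p.2).prod (lam p.1)) :
    ∀ h : Hypothesis X Y,
      ∫ z : X × Y, loss (h.toFun z.1) z.2 ∂P =
        ∫ z : X × Y,
          (∫ u, ∑ y : Y, (lam z.1 {y}).toReal * loss u y ∂((τ z.2).map h.toFun)) ∂Pt := by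
  intro h
  have hC : 0 ≤ C := le_trans (hnonneg 0 (Classical.arbitrary Y)) (hbdd 0 _)
  -- the cleaning kernel
  set κ : Kernel (X × Y) (X × Y) :=
    (τ.comap Prod.snd measurable_snd) ×ₖ (lam.comap Prod.fst measurable_fst) with hκ
  have hκapp : ∀ p : X × Y, κ p = (τ p.2).prod (lam p.1) := by
    intro p
    rw [hκ, Kernel.prod_apply, Kernel.comap_apply, Kernel.comap_apply]
  -- the loss as an ENNReal-valued function
  set L : X × Y → ENNReal := fun z => ENNReal.ofReal (loss (h.toFun z.1) z.2) with hL
  have hLmeas : Measurable L := by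
    apply Measurable.ennreal_ofReal
    exact hmeas.comp ((h.measurable'.comp measurable_fst).prodMk measurable_snd)
  have hLle : ∀ z, L z ≤ ENNReal.ofReal C := fun z => ENNReal.ofReal_le_ofReal (hbdd _ _)
  -- LHS = (∫⁻ L ∂P).toReal
  have hlossmeas : Measurable fun z : X × Y => loss (h.toFun z.1) z.2 :=
    hmeas.comp ((h.measurable'.comp measurable_fst).prodMk measurable_snd)
  have hLHS : ∫ z : X × Y, loss (h.toFun z.1) z.2 ∂P = (∫⁻ z, L z ∂P).toReal := by
    rw [integral_eq_lintegral_of_nonneg_ae (Filter.Eventually.of_forall fun z => hnonneg _ _)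
      hlossmeas.aestronglyMeasurable]
  -- ∫⁻ L ∂P = ∫⁻ p, ∫⁻ z, L z ∂(κ p) ∂Pt
  have hbind : ∫⁻ z, L z ∂P = ∫⁻ p, ∫⁻ z, L z ∂(κ p) ∂Pt := by
    rw [hclean]
    have : (fun p : X × Y => (τ p.2).prod (lam p.1)) = fun p => κ p := by
      funext p; rw [hκapp]
    rw [this]
    exact MeasureTheory.Measure.lintegral_bind κ.measurable.aemeasurable hLmeas.aemeasurable
  -- pointwise identification of the corrected loss with the lintegral under κ
  have hpt : ∀ p : X × Y,
      ∫ u, ∑ y : Y, (lam p.1 {y}).toReal * loss u y ∂((τ p.2).map h.toFun)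
        = (∫⁻ z, L z ∂(κ p)).toReal := by
    intro p
    have hmap : ∫ u, ∑ y : Y, (lam p.1 {y}).toReal * loss u y ∂((τ p.2).map h.toFun)
        = ∫ x, ∑ y : Y, (lam p.1 {y}).toReal * loss (h.toFun x) y ∂(τ p.2) := by
      refine integral_map h.measurable'.aemeasurable ?_
      refine (Finset.measurable_sum _ fun y _ => ?_).aestronglyMeasurable
      exact measurable_const.mul (hmeas.comp (measurable_id.prodMk measurable_const))
    rw [hmap]
    have hsum : ∀ x : X, ∑ y : Y, (lam p.1 {y}).toReal * loss (h.toFun x) y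
        = ∫ y, loss (h.toFun x) y ∂(lam p.1) := by
      intro x
      rw [integral_fintype _]
      simp [mul_comm, Measure.real]
      exact Integrable.of_finite
    simp_rw [hsum]
    have hinner : ∀ x : X, ∫ y, loss (h.toFun x) y ∂(lam p.1)
        = (∫⁻ y, L (x, y) ∂(lam p.1)).toReal := by
      intro x
      have hm : Measurable fun y : Y => loss (h.toFun x) y :=
        hmeas.comp (measurable_const.prodMk measurable_id)
      rw [integral_eq_lintegral_of_nonneg_ae (Filter.Eventually.of_forall fun y => hnonneg _ _)
        hm.aestronglyMeasurable]
    simp_rw [hinner]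
    have hinmeas : Measurable fun x => ∫⁻ y, L (x, y) ∂(lam p.1) :=
      Measurable.lintegral_prod_right hLmeas
    have hlt : ∀ᵐ x ∂(τ p.2), (∫⁻ y, L (x, y) ∂(lam p.1)) < ⊤ := by
      refine Filter.Eventually.of_forall fun x => ?_
      calc ∫⁻ y, L (x, y) ∂(lam p.1) ≤ ∫⁻ _, ENNReal.ofReal C ∂(lam p.1) :=
            lintegral_mono fun y => hLle _
        _ = ENNReal.ofReal C := by simp
        _ < ⊤ := ENNReal.ofReal_lt_top
    rw [integral_toReal hinmeas.aemeasurable hlt]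
    congr 1
    rw [hκapp, MeasureTheory.lintegral_prod _ hLmeas.aemeasurable]
  -- RHS as toReal of a lintegral
  have hFmeas : Measurable fun p => ∫⁻ z, L z ∂(κ p) :=
    (Measure.measurable_lintegral hLmeas).comp κ.measurable
  have hFlt : ∀ᵐ p ∂Pt, (∫⁻ z, L z ∂(κ p)) < ⊤ := by
    refine Filter.Eventually.of_forall fun p => ?_
    have : IsProbabilityMeasure (κ p) := inferInstance
    calc ∫⁻ z, L z ∂(κ p) ≤ ∫⁻ _, ENNReal.ofReal C ∂(κ p) := lintegral_mono fun z => hLle _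
      _ = ENNReal.ofReal C := by simp
      _ < ⊤ := ENNReal.ofReal_lt_top
  calc ∫ z : X × Y, loss (h.toFun z.1) z.2 ∂P = (∫⁻ z, L z ∂P).toReal := hLHS
    _ = (∫⁻ p, ∫⁻ z, L z ∂(κ p) ∂Pt).toReal := by rw [hbind]
    _ = ∫ p, (∫⁻ z, L z ∂(κ p)).toReal ∂Pt := (integral_toReal hFmeas.aemeasurable hFlt).symm
    _ = ∫ z : X × Y,
          (∫ u, ∑ y : Y, (lam z.1 {y}).toReal * loss u y ∂((τ z.2).map h.toFun)) ∂Pt := by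
        refine integral_congr_ae (Filter.Eventually.of_forall fun p => ?_)
        dsimp only
        rw [hpt]
end

section
/- Bayes risk under attribute corruption (Lemma on X-corruption): let π be a probability measure on the finite label space Y, E a Markov kernel from Y to X (the experiment), and let P be the probability measure on X × Y determined by P(A × {y}) = π({y}) · E(y)(A). Let τ be a Markov kernel from X × Y to X and let κ be the Markov kernel from X × Y to X × Y sending (x, y) to the product measure τ(x, y) ×ₘ δ_y. Then: (i) P ∘ κ is the probability measure determined by (P ∘ κ)(A × {y}) = π({y}) · E'(y)(A), where E'(y) := (E(y)) bound with the kernel x ↦ τ(x, y) (the partial chain composition E ∘_X τ), so in particular the Y-marginal of P ∘ κ is still π; and (ii) for every hypothesis h, ∫_{X×Y} ℓ(h(x̃), ỹ) d(P ∘ κ)(x̃, ỹ) = ∫_{X×Y} [ ∫_X ℓ(h(x̃), y) dτ(x, y)(x̃) ] dP(x, y), hence for every hypothesis class H the corresponding constrained Bayes risks are equal. -/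
open MeasureTheory ProbabilityTheory
open scoped ENNReal

/-- Bayes risk under attribute corruption: for `P = π_Y × E` and the corruption
`κ = τ ⊗ δ_Y` with `τ : X × Y ⇝ X`, (i) `P ∘ κ = π_Y × (E ∘_X τ)` (so the `Y`-marginal
is still `π`), and (ii) the risk of every hypothesis on `P ∘ κ` equals the risk of the
`τ`-corrected function on `P`, hence the constrained Bayes risks agree. -/
theorem br_attribute_corruption
    {X Y : Type*} [MeasurableSpace X]
    [Fintype Y] [Nonempty Y] [MeasurableSpace Y] [MeasurableSingletonClass Y]
    (loss : Measure Y → Y → ℝ)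
    (hmeas : Measurable fun p : Measure Y × Y => loss p.1 p.2)
    (hnonneg : ∀ p y, 0 ≤ loss p y)
    (C : ℝ) (hbdd : ∀ p y, loss p y ≤ C)
    (π : Measure Y) [IsProbabilityMeasure π]
    (E : Kernel Y X) [IsMarkovKernel E]
    (P : Measure (X × Y)) [IsProbabilityMeasure P]
    (hP : ∀ (A : Set X), MeasurableSet A → ∀ y : Y, P (A ×ˢ {y}) = π {y} * E y A)
    (τ : Kernel (X × Y) X) [IsMarkovKernel τ] :
    ((∀ (A : Set X), MeasurableSet A → ∀ y : Y,
        (P.bind fun p : X × Y => (τ p).prod (Measure.dirac p.2)) (A ×ˢ {y}) =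
          π {y} * ((E y).bind fun x => τ (x, y)) A) ∧
      (P.bind fun p : X × Y => (τ p).prod (Measure.dirac p.2)).map Prod.snd = π) ∧
    (∀ h : Hypothesis X Y,
      ∫ z, loss (h.toFun z.1) z.2
          ∂(P.bind fun p : X × Y => (τ p).prod (Measure.dirac p.2)) =
        ∫ z : X × Y, (∫ x', loss (h.toFun x') z.2 ∂(τ z)) ∂P) ∧
    ∀ H : Set (Hypothesis X Y),
      (⨅ h ∈ H, ∫ z, loss (h.toFun z.1) z.2
          ∂(P.bind fun p : X × Y => (τ p).prod (Measure.dirac p.2))) =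
        ⨅ h ∈ H, ∫ z : X × Y, (∫ x', loss (h.toFun x') z.2 ∂(τ z)) ∂P := by
  classical
  -- the corruption kernel
  have hκapp : (fun p : X × Y => (τ p).prod (Measure.dirac p.2)) =
      fun p => (τ ×ₖ Kernel.deterministic Prod.snd measurable_snd) p := by
    funext p
    rw [Kernel.prod_apply, Kernel.deterministic_apply]
  have hκmeas : Measurable fun p : X × Y => (τ p).prod (Measure.dirac p.2) := by
    rw [hκapp]; exact Kernel.measurable _
  -- the disintegration of `P`
  have hrestrict : ∀ y : Y,
      (P.restrict (Prod.snd ⁻¹' {y})).map Prod.fst = π {y} • E y := by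
    intro y
    ext B hB
    rw [Measure.map_apply measurable_fst hB, Measure.restrict_apply (measurable_fst hB),
      (show Prod.fst ⁻¹' B ∩ Prod.snd ⁻¹' {y} = B ×ˢ {y} from (Set.prod_eq B {y}).symm),
      hP B hB y]
    simp
  have hkey : ∀ (y : Y) (f : X → ℝ≥0∞), Measurable f →
      ∫⁻ p in Prod.snd ⁻¹' {y}, f p.1 ∂P = π {y} * ∫⁻ x, f x ∂E y := by
    intro y f hf
    rw [← lintegral_map hf measurable_fst, hrestrict y, lintegral_smul_measure, smul_eq_mul]
  have hτy : ∀ (y : Y), Measurable fun x : X => τ (x, y) :=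
    fun y => (Kernel.measurable τ).comp measurable_prodMk_right
  -- part (i): the corrupted measure
  have hi : ∀ (A : Set X), MeasurableSet A → ∀ y : Y,
      (P.bind fun p : X × Y => (τ p).prod (Measure.dirac p.2)) (A ×ˢ {y}) =
        π {y} * ((E y).bind fun x => τ (x, y)) A := by
    intro A hA y
    have hAy : MeasurableSet (A ×ˢ ({y} : Set Y)) := hA.prod (measurableSet_singleton y)
    rw [Measure.bind_apply hAy hκmeas.aemeasurable]
    have heval : ∀ p : X × Y, ((τ p).prod (Measure.dirac p.2)) (A ×ˢ {y}) =
        (Prod.snd ⁻¹' ({y} : Set Y)).indicator (fun p => τ p A) p := by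
      intro p
      rw [Measure.prod_prod, Measure.dirac_apply]
      by_cases hp : p.2 = y <;> simp [Set.indicator, hp]
    simp_rw [heval]
    rw [lintegral_indicator (measurable_snd (measurableSet_singleton y))]
    have hcongr : ∫⁻ p in Prod.snd ⁻¹' {y}, τ p A ∂P
        = ∫⁻ p in Prod.snd ⁻¹' {y}, τ (p.1, y) A ∂P := by
      refine setLIntegral_congr_fun (measurable_snd (measurableSet_singleton y))
        (fun p hp => ?_)
      simp only [Set.mem_preimage, Set.mem_singleton_iff] at hp
      rw [← hp]
    rw [hcongr, hkey y (fun x => τ (x, y) A)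
      ((Kernel.measurable_coe τ hA).comp measurable_prodMk_right),
      Measure.bind_apply hA (hτy y).aemeasurable]
  have hprob : ∀ y : Y, ((E y).bind fun x => τ (x, y)) Set.univ = 1 := by
    intro y
    rw [Measure.bind_apply MeasurableSet.univ (hτy y).aemeasurable]
    simp
  -- part (i'): the marginal
  have hmarg : (P.bind fun p : X × Y => (τ p).prod (Measure.dirac p.2)).map Prod.snd = π := by
    rw [Measure.ext_iff_singleton]
    intro y
    rw [Measure.map_apply measurable_snd (measurableSet_singleton y),
      (show Prod.snd ⁻¹' ({y} : Set Y) = Set.univ ×ˢ {y} by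
        rw [Set.prod_eq]; simp),
      hi Set.univ MeasurableSet.univ y, hprob y, mul_one]
  -- part (ii)
  have hii : ∀ h : Hypothesis X Y,
      ∫ z, loss (h.toFun z.1) z.2
          ∂(P.bind fun p : X × Y => (τ p).prod (Measure.dirac p.2)) =
        ∫ z : X × Y, (∫ x', loss (h.toFun x') z.2 ∂(τ z)) ∂P := by
    intro h
    have hg : Measurable fun z : X × Y => loss (h.toFun z.1) z.2 :=
      hmeas.comp ((h.measurable'.comp measurable_fst).prodMk measurable_snd)
    have hg2 : Measurable fun z : (X × Y) × X => loss (h.toFun z.2) z.1.2 :=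
      hmeas.comp ((h.measurable'.comp measurable_snd).prodMk
        (measurable_snd.comp measurable_fst))
    have hint : ∀ p : X × Y, Integrable (fun x' => loss (h.toFun x') p.2) (τ p) := by
      intro p
      refine (integrable_const C).mono'
        ((hmeas.comp (h.measurable'.prodMk measurable_const)).aestronglyMeasurable)
        (ae_of_all _ fun x => ?_)
      rw [Real.norm_eq_abs, abs_of_nonneg (hnonneg _ _)]
      exact hbdd _ _
    have hF : StronglyMeasurable fun p : X × Y => ∫ x', loss (h.toFun x') p.2 ∂(τ p) :=
      (hg2.stronglyMeasurable).integral_kernel_prod_right' (κ := τ)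
    -- convert both sides to lintegrals
    rw [integral_eq_lintegral_of_nonneg_ae (ae_of_all _ fun z => hnonneg _ _)
        hg.aestronglyMeasurable,
      integral_eq_lintegral_of_nonneg_ae
        (ae_of_all _ fun z => integral_nonneg fun x' => hnonneg _ _)
        hF.aestronglyMeasurable]
    congr 1
    rw [Measure.lintegral_bind hκmeas.aemeasurable hg.ennreal_ofReal.aemeasurable]
    refine lintegral_congr fun p => ?_
    rw [Measure.prod_dirac, lintegral_map hg.ennreal_ofReal
      measurable_prodMk_right,
      ← ofReal_integral_eq_lintegral_ofReal (hint p) (ae_of_all _ fun x' => hnonneg _ _)]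
  exact ⟨⟨hi, hmarg⟩, hii, fun H => iInf_congr fun h => iInf_congr fun _ => hii h⟩
end

section
/- Bayes risk under label corruption (Lemma on Y-corruption): let π be a probability measure on the measurable space X, F a Markov kernel from X to the finite label space Y (the posterior), and let P be the probability measure on X × Y determined by P(A × {y}) = ∫_A F(x)({y}) dπ(x). Let λ be a Markov kernel from X × Y to Y and let κ be the Markov kernel from X × Y to X × Y sending (x, y) to the product measure δ_x ×ₘ λ(x, y). Then: (i) P ∘ κ is the probability measure determined by (P ∘ κ)(A × {ỹ}) = ∫_A F'(x)({ỹ}) dπ(x), where F'(x) := ∑_{y ∈ Y} F(x)({y}) • λ(x, y) (the partial chain composition F ∘_Y λ), so in particular the X-marginal of P ∘ κ is still π; and (ii) for every hypothesis h, ∫_{X×Y} ℓ(h(x̃), ỹ) d(P ∘ κ)(x̃, ỹ) = ∫_{X×Y} [ ∑_{ỹ ∈ Y} λ(x, y)({ỹ}) · ℓ(h(x), ỹ) ] dP(x, y), hence for every hypothesis class H the corresponding constrained Bayes risks are equal; in particular label corruption modifies only the loss function and leaves the hypothesis class untouched. -/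
open MeasureTheory ProbabilityTheory

/-- Bayes risk under label corruption: for `P = π_X × F` and the corruption
`κ = δ_X ⊗ λ` with `λ : X × Y ⇝ Y`, (i) `P ∘ κ = π_X × (F ∘_Y λ)` where
`F'(x) = ∑_y F(x)({y}) • λ(x, y)` (so the `X`-marginal is still `π`), and
(ii) the risk of every hypothesis on `P ∘ κ` equals the risk of the `λ`-corrected
loss on `P`, hence the constrained Bayes risks agree: label corruption modifies only
the loss function and leaves the hypothesis class untouched. -/
theorem br_label_corruption
    {X Y : Type*} [MeasurableSpace X]
    [Fintype Y] [Nonempty Y] [MeasurableSpace Y] [MeasurableSingletonClass Y]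
    (loss : Measure Y → Y → ℝ)
    (hmeas : Measurable fun p : Measure Y × Y => loss p.1 p.2)
    (hnonneg : ∀ p y, 0 ≤ loss p y)
    (C : ℝ) (hbdd : ∀ p y, loss p y ≤ C)
    (π : Measure X) [IsProbabilityMeasure π]
    (F : Kernel X Y) [IsMarkovKernel F]
    (P : Measure (X × Y)) [IsProbabilityMeasure P]
    (hP : ∀ (A : Set X), MeasurableSet A → ∀ y : Y,
      P (A ×ˢ {y}) = ∫⁻ x in A, F x {y} ∂π)
    (lam : Kernel (X × Y) Y) [IsMarkovKernel lam] :
    ((∀ (A : Set X), MeasurableSet A → ∀ yt : Y,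
        (P.bind fun p : X × Y => (Measure.dirac p.1).prod (lam p)) (A ×ˢ {yt}) =
          ∫⁻ x in A, (∑ y : Y, F x {y} • lam (x, y)) {yt} ∂π) ∧
      (P.bind fun p : X × Y => (Measure.dirac p.1).prod (lam p)).map Prod.fst = π) ∧
    (∀ h : Hypothesis X Y,
      ∫ z, loss (h.toFun z.1) z.2
          ∂(P.bind fun p : X × Y => (Measure.dirac p.1).prod (lam p)) =
        ∫ z : X × Y, ∑ yt : Y, (lam z {yt}).toReal * loss (h.toFun z.1) yt ∂P) ∧
    ∀ H : Set (Hypothesis X Y),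
      (⨅ h ∈ H, ∫ z, loss (h.toFun z.1) z.2
          ∂(P.bind fun p : X × Y => (Measure.dirac p.1).prod (lam p))) =
        ⨅ h ∈ H, ∫ z : X × Y, ∑ yt : Y, (lam z {yt}).toReal * loss (h.toFun z.1) yt ∂P := by
  classical
  -- the corruption kernel
  set K : Kernel (X × Y) (X × Y) :=
    (Kernel.deterministic Prod.fst measurable_fst) ×ₖ lam with hK
  have hKapp : (fun p : X × Y => (Measure.dirac p.1).prod (lam p)) = fun p => K p := by
    funext p
    rw [hK, Kernel.prod_apply, Kernel.deterministic_apply]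
  have hKmeas : Measurable (fun p : X × Y => (Measure.dirac p.1).prod (lam p)) := by
    rw [hKapp]; exact K.measurable
  -- P is the composition-product of π and F
  have hPF : P = π ⊗ₘ F := by
    refine ext_of_generate_finite _ generateFrom_prod.symm isPiSystem_prod ?_ (by simp)
    rintro s ⟨A, hA, B, hB, rfl⟩
    simp only [Set.mem_setOf_eq] at hA hB
    show P (A ×ˢ B) = _
    rw [Measure.compProd_apply_prod hA hB]
    have hBsplit : A ×ˢ B = ⋃ y ∈ (Set.toFinite B).toFinset, A ×ˢ ({y} : Set Y) := by
      ext ⟨x, y⟩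
      simp only [Set.mem_prod, Set.mem_iUnion, Set.Finite.mem_toFinset, Set.mem_singleton_iff]
      aesop
    have hdisj : (↑(Set.toFinite B).toFinset : Set Y).PairwiseDisjoint
        (fun y => A ×ˢ ({y} : Set Y)) := by
      intro y _ y' _ hyy'
      rw [Function.onFun, Set.disjoint_left]
      rintro ⟨x, z⟩ hz hz'
      exact hyy' ((Set.mem_singleton_iff.1 hz.2).symm.trans (Set.mem_singleton_iff.1 hz'.2))
    rw [hBsplit, measure_biUnion_finset hdisj
      (fun y _ => hA.prod (measurableSet_singleton y))]
    have hFB : ∀ x : X, F x B = ∑ y ∈ (Set.toFinite B).toFinset, F x {y} := by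
      intro x
      nth_rewrite 1 [show B = ⋃ y ∈ (Set.toFinite B).toFinset, ({y} : Set Y) by
        ext y
        simp only [Set.mem_iUnion, Set.Finite.mem_toFinset, Set.mem_singleton_iff]
        exact ⟨fun h => ⟨y, h, rfl⟩, fun ⟨z, hz, h⟩ => h ▸ hz⟩]
      rw [measure_biUnion_finset
        (by intro y _ y' _ h
            rw [Function.onFun, Set.disjoint_left]
            rintro z hz hz'
            exact h ((Set.mem_singleton_iff.1 hz).symm.trans (Set.mem_singleton_iff.1 hz')))
        (fun y _ => measurableSet_singleton y)]
    simp_rw [hFB, hP A hA]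
    rw [lintegral_finset_sum _ fun y _ => F.measurable_coe (measurableSet_singleton y)]
  -- (i) the rectangle formula
  have hbind : ∀ (A : Set X), MeasurableSet A → ∀ yt : Y,
      (P.bind fun p : X × Y => (Measure.dirac p.1).prod (lam p)) (A ×ˢ {yt}) =
        ∫⁻ x in A, (∑ y : Y, F x {y} • lam (x, y)) {yt} ∂π := by
    intro A hA yt
    rw [Measure.bind_apply (hA.prod (measurableSet_singleton yt)) hKmeas.aemeasurable]
    have h1 : ∀ p : X × Y,
        (Measure.dirac p.1).prod (lam p) (A ×ˢ {yt}) =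
          A.indicator (fun _ => (1 : ENNReal)) p.1 * lam p {yt} := by
      intro p
      rw [Measure.prod_prod, Measure.dirac_apply' _ hA]
      rfl
    simp_rw [h1, hPF]
    rw [Measure.lintegral_compProd
      (f := fun p : X × Y => A.indicator (fun _ => (1 : ENNReal)) p.1 * lam p {yt})
      (((measurable_one.indicator hA).comp measurable_fst).mul
        (lam.measurable_coe (measurableSet_singleton yt)))]
    have h2 : ∀ x : X,
        (∫⁻ y, A.indicator (fun _ => (1 : ENNReal)) (x, y).1 * lam ((x : X), y) {yt} ∂(F x)) =
          A.indicator (fun x => ∑ y : Y, (F x {y} • lam (x, y)) {yt}) x := by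
      intro x
      by_cases hx : x ∈ A
      · simp only [Set.indicator_of_mem hx, one_mul]
        rw [lintegral_fintype]
        congr 1
        funext y
        rw [Measure.smul_apply, smul_eq_mul, mul_comm]
      · simp [Set.indicator_of_notMem hx]
    simp_rw [h2]
    rw [lintegral_indicator hA]
    congr 1
    funext x
    rw [Measure.finset_sum_apply]
  -- (i) the marginal
  have hmarg : (P.bind fun p : X × Y => (Measure.dirac p.1).prod (lam p)).map Prod.fst = π := by
    ext A hA
    rw [Measure.map_apply measurable_fst hA,
      Measure.bind_apply (measurable_fst hA) hKmeas.aemeasurable]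
    have h1 : ∀ p : X × Y,
        (Measure.dirac p.1).prod (lam p) (Prod.fst ⁻¹' A) =
          (Prod.fst ⁻¹' A : Set (X × Y)).indicator (fun _ => (1 : ENNReal)) p := by
      intro p
      have hpre : (Prod.fst ⁻¹' A : Set (X × Y)) = A ×ˢ (Set.univ : Set Y) := by
        ext ⟨x, y⟩; simp
      rw [hpre, Measure.prod_prod, measure_univ, mul_one, Measure.dirac_apply' _ hA]
      by_cases hx : p.1 ∈ A
      · simp [Set.indicator_of_mem hx, Set.indicator_of_mem (show p ∈ A ×ˢ (Set.univ : Set Y)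
          from ⟨hx, trivial⟩), hpre]
      · simp [Set.indicator_of_notMem hx, hpre,
          Set.indicator_of_notMem (show p ∉ A ×ˢ (Set.univ : Set Y) from fun h => hx h.1)]
    simp_rw [h1]
    rw [lintegral_indicator (measurable_fst hA), setLIntegral_one]
    have hpre : (Prod.fst ⁻¹' A : Set (X × Y)) = A ×ˢ (Set.univ : Set Y) := by
      ext ⟨x, y⟩; simp
    rw [hpre, hPF, Measure.compProd_apply_prod hA MeasurableSet.univ]
    simp
  -- (ii) the risk identity
  have hrisk : ∀ h : Hypothesis X Y,
      ∫ z, loss (h.toFun z.1) z.2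
          ∂(P.bind fun p : X × Y => (Measure.dirac p.1).prod (lam p)) =
        ∫ z : X × Y, ∑ yt : Y, (lam z {yt}).toReal * loss (h.toFun z.1) yt ∂P := by
    intro h
    have hg : Measurable fun z : X × Y => loss (h.toFun z.1) z.2 :=
      hmeas.comp ((h.measurable'.comp measurable_fst).prodMk measurable_snd)
    have hr : Measurable fun z : X × Y =>
        ∑ yt : Y, (lam z {yt}).toReal * loss (h.toFun z.1) yt := by
      refine Finset.measurable_sum _ fun yt _ => ?_
      exact ((lam.measurable_coe (measurableSet_singleton yt)).ennreal_toReal).mul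
        (hmeas.comp ((h.measurable'.comp measurable_fst).prodMk measurable_const))
    rw [integral_eq_lintegral_of_nonneg_ae (ae_of_all _ fun z => hnonneg _ _)
      hg.aestronglyMeasurable,
      integral_eq_lintegral_of_nonneg_ae (ae_of_all _ fun z =>
        Finset.sum_nonneg fun yt _ => mul_nonneg ENNReal.toReal_nonneg (hnonneg _ _))
      hr.aestronglyMeasurable]
    congr 1
    rw [Measure.lintegral_bind (f := fun z : X × Y => ENNReal.ofReal (loss (h.toFun z.1) z.2))
      hKmeas.aemeasurable (ENNReal.measurable_ofReal.comp hg).aemeasurable]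
    have hL : ∀ p : X × Y,
        (∫⁻ z, ENNReal.ofReal (loss (h.toFun z.1) z.2) ∂((Measure.dirac p.1).prod (lam p))) =
          ∑ yt : Y, lam p {yt} * ENNReal.ofReal (loss (h.toFun p.1) yt) := by
      intro p
      haveI : IsProbabilityMeasure (lam p) := inferInstance
      rw [MeasureTheory.lintegral_prod (fun z : X × Y => ENNReal.ofReal (loss (h.toFun z.1) z.2)) ((ENNReal.measurable_ofReal.comp hg).aemeasurable : AEMeasurable (fun z : X × Y => ENNReal.ofReal (loss (h.toFun z.1) z.2)) _)]
      rw [lintegral_dirac' _ (by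
        exact Measurable.lintegral_prod_right (ENNReal.measurable_ofReal.comp hg))]
      rw [lintegral_fintype]
      exact Finset.sum_congr rfl fun yt _ => mul_comm _ _
    simp_rw [hL]
    have hR : ∀ z : X × Y,
        ENNReal.ofReal (∑ yt : Y, (lam z {yt}).toReal * loss (h.toFun z.1) yt) =
          ∑ yt : Y, lam z {yt} * ENNReal.ofReal (loss (h.toFun z.1) yt) := by
      intro z
      rw [ENNReal.ofReal_sum_of_nonneg fun yt _ =>
        mul_nonneg ENNReal.toReal_nonneg (hnonneg _ _)]
      refine Finset.sum_congr rfl fun yt _ => ?_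
      rw [ENNReal.ofReal_mul ENNReal.toReal_nonneg,
        ENNReal.ofReal_toReal (measure_ne_top _ _)]
    simp_rw [hR]
  exact ⟨⟨hbind, hmarg⟩, hrisk, fun H => iInf_congr fun h => iInf_congr fun _ => hrisk h⟩
end
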